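/- Let K be a Hilbert space (real or complex), let T ∈ B(K) satisfy ‖T − 1‖ < 1, and let M ⊆ K be a closed subspace with orthogonal complement M⊥. Then K = T(M) + M⊥ and T(M) ∩ M⊥ = {0}; i.e. every x ∈ K can be written uniquely as x = T m + n with m ∈ M and n ∈ M⊥. -/

import Mathlib

/-- If `T ∈ B(K)` satisfies `‖T − 1‖ < 1` and `M` is a closed subspace
of the Hilbert space `K`, then `K = T(M) ∔ M⊥`: every `x ∈ K` is uniquely of the form
`x = T m + n` with `m ∈ M`, `n ∈ M⊥`; in particular `T(M) ∩ M⊥ = {0}`. -/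
theorem tm_plus_orthogonal_complement
    {𝕜 : Type*} [RCLike 𝕜] {K : Type*} [NormedAddCommGroup K]
    [InnerProductSpace 𝕜 K] [CompleteSpace K]
    (T : K →L[𝕜] K) (hT : ‖T - 1‖ < 1)
    (M : Submodule 𝕜 K) (hM : IsClosed (M : Set K)) :
    (∀ x : K, ∃ m ∈ M, ∃ n ∈ Mᗮ, x = T m + n ∧
      ∀ m' ∈ M, ∀ n' ∈ Mᗮ, x = T m' + n' → m' = m ∧ n' = n) ∧
    (M.map (T : K →ₗ[𝕜] K) : Set K) ∩ (Mᗮ : Set K) = {0} := by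
  haveI : CompleteSpace M := hM.completeSpace_coe
  set P : K →L[𝕜] M := M.orthogonalProjectionOnto with hPdef
  set E : M →L[𝕜] M := P.comp ((T - 1).comp M.subtypeL) with hEdef
  have hEnorm : ‖E‖ < 1 := by
    have h1 : ‖E‖ ≤ ‖P‖ * ‖(T - 1).comp M.subtypeL‖ := ContinuousLinearMap.opNorm_comp_le _ _
    have h2 : ‖(T - 1).comp M.subtypeL‖ ≤ ‖T - 1‖ * ‖M.subtypeL‖ :=
      ContinuousLinearMap.opNorm_comp_le _ _
    have hP : ‖P‖ ≤ 1 := Submodule.orthogonalProjectionOnto_norm_le M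
    have hS : ‖M.subtypeL‖ ≤ 1 := Submodule.norm_subtypeL_le M
    nlinarith [norm_nonneg E, norm_nonneg P, norm_nonneg (T - 1), norm_nonneg M.subtypeL,
      norm_nonneg ((T - 1).comp M.subtypeL)]
  have hnegE : ‖(-E : M →L[𝕜] M)‖ < 1 := by rw [show (-E : M →L[𝕜] M) = -E from rfl, norm_neg E]; exact hEnorm
  set u : (M →L[𝕜] M)ˣ := Units.oneSub (-E) hnegE with hudef
  have huval : (u : M →L[𝕜] M) = 1 + E := by
    simp [hudef, Units.oneSub, sub_neg_eq_add]
  have hA : ∀ m : M, ((u : M →L[𝕜] M) m : M) = P (T m) := by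
    intro m
    rw [huval]
    have : E m = P (T m) - P (m : K) := by
      simp [hEdef, ContinuousLinearMap.comp_apply, ContinuousLinearMap.sub_apply, map_sub]
    have hPm : P (m : K) = m := Submodule.orthogonalProjectionOnto_mem_subspace_eq_self m
    simp only [ContinuousLinearMap.add_apply, ContinuousLinearMap.one_apply, this, hPm]
    abel
  have hinj : Function.Injective (u : M →L[𝕜] M) := by
    intro a b hab
    have h := congrArg (fun z => ((u⁻¹ : (M →L[𝕜] M)ˣ) : M →L[𝕜] M) z) hab
    rwa [← ContinuousLinearMap.mul_apply, ← ContinuousLinearMap.mul_apply, Units.inv_mul,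
      ContinuousLinearMap.one_apply, ContinuousLinearMap.one_apply] at h
  constructor
  · intro x
    set m0 : M := ((u⁻¹ : (M →L[𝕜] M)ˣ) : M →L[𝕜] M) (P x) with hm0
    have hPTm0 : P (T m0) = P x := by
      rw [← hA]
      rw [hm0, ← ContinuousLinearMap.mul_apply, Units.mul_inv, ContinuousLinearMap.one_apply]
    have hn : x - T m0 ∈ Mᗮ := by
      rw [← Submodule.orthogonalProjectionOnto_eq_zero_iff]
      simp [map_sub, ← hPdef, hPTm0]
    refine ⟨m0, m0.2, x - T m0, hn, by abel, ?_⟩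
    intro m' hm' n' hn' heq
    have hm'eq : (⟨m', hm'⟩ : M) = m0 := by
      apply hinj
      rw [hA, hA]
      have hPn' : P n' = 0 := Submodule.orthogonalProjectionOnto_eq_zero_iff.2 hn'
      have : P x = P (T m') := by rw [heq, map_add, hPn', add_zero]
      rw [hPTm0, this]
    have hm'' : m' = (m0 : K) := congrArg Subtype.val hm'eq
    constructor
    · exact hm''
    · rw [heq, hm'']; abel
  · ext y
    simp only [Set.mem_inter_iff, Set.mem_singleton_iff, SetLike.mem_coe, Submodule.mem_map]
    constructor
    · rintro ⟨⟨m, hm, rfl⟩, hy⟩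
      have hPy : P (T m) = 0 := Submodule.orthogonalProjectionOnto_eq_zero_iff.2 hy
      have : (u : M →L[𝕜] M) ⟨m, hm⟩ = 0 := by
        have := hA ⟨m, hm⟩
        simp only at this
        rw [this, hPy]
      have hz : (⟨m, hm⟩ : M) = 0 := by
        apply hinj; rw [this, map_zero]
      have : m = (0 : K) := congrArg Subtype.val hz
      rw [this, map_zero]
    · rintro rfl
      exact ⟨⟨0, M.zero_mem, map_zero T⟩, Mᗮ.zero_mem⟩
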